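/- Define Ξ on M_j inductively: Ξ(A) = 0 for A ∈ M_1, and if the maximal decomposition of A is A_1 ⊞_s ... ⊞_s A_m, then Ξ(A) = Σ_k Ξ(A_k) + (m-1)(1-s). For any r ≤ j - 1, the minimum of χ(A) over all A ∈ M_j with Ξ(A) = r equals χ(A^{(j)}_{1 - r/(j-1)}) = j/(j - r); that is, the equidistant matrix minimizes χ among ultrametric matrices with given Ξ-value. -/

import Mathlib

/-- Membership in the class `M_j` of ultrametric matrices from the paper. -/
def MemUltra (η : ℝ) {ι : Type*} [Fintype ι] [DecidableEq ι] (A : Matrix ι ι ℝ) : Prop :=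
  A.IsSymm ∧ (∀ i, A i i = 1) ∧
  (∀ i l, i ≠ l → 0 ≤ A i l ∧ A i l ≤ 1 - η) ∧
  (∀ i l p, i ≠ l → l ≠ p → i ≠ p → min (A l p) (A i p) ≤ A i l)

/-- `χ(B)`: the sum of all the entries of `B⁻¹`. -/
noncomputable def chi {ι : Type*} [Fintype ι] [DecidableEq ι] (B : Matrix ι ι ℝ) : ℝ :=
  ∑ i, ∑ l, B⁻¹ i l

/-- The equidistant matrix `A_r^{(j)}`. -/
def eqMat (j : ℕ) (r : ℝ) : Matrix (Fin j) (Fin j) ℝ :=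
  Matrix.of fun i l => if i = l then 1 else r

/-- The weight of the "attach to the best earlier vertex" spanning tree determined by an
ordering `σ` of the indices (for `k = σ⁻¹`-first index the empty `sSup` contributes `0`). -/
noncomputable def treeSum {j : ℕ} (A : Matrix (Fin j) (Fin j) ℝ) (σ : Equiv.Perm (Fin j)) : ℝ :=
  ∑ k : Fin j, sSup ((fun i : Fin j => A (σ i) (σ k)) '' {i | i < k})

/-- `Ξ(A) = (j-1) - (maximum spanning tree weight of A)`.  For ultrametric matrices the
maximum spanning tree weight equals the supremum over orderings of the greedy tree weight,
and this formula agrees with the paper's inductive definition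
`Ξ(A₁ ⊞_s ⋯ ⊞_s A_m) = Σ Ξ(A_k) + (m-1)(1-s)`, `Ξ = 0` on `M₁`. -/
noncomputable def Xi {j : ℕ} (A : Matrix (Fin j) (Fin j) ℝ) : ℝ :=
  ((j : ℝ) - 1) - ⨆ σ : Equiv.Perm (Fin j), treeSum A σ

section Aux

open Finset

lemma qf_indicator_nonneg {ι : Type*} [Fintype ι] (R : ι → ι → Prop) [DecidableRel R]
    (hsymm : ∀ i l, R i l → R l i)
    (htrans : ∀ i l p, R i l → R l p → R i p) (x : ι → ℝ) :
    0 ≤ ∑ i, ∑ l, (if R i l then (1:ℝ) else 0) * (x i * x l) := by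
  classical
  set e : ι → ι → ℝ := fun i l => if R i l then (1:ℝ) else 0 with he
  set n : ι → ℝ := fun i => ∑ l, e i l with hn
  set S : ι → ℝ := fun i => ∑ l, e i l * x l with hS
  have he0 : ∀ i l, 0 ≤ e i l := by
    intro i l; simp only [he]; by_cases h : R i l <;> simp [h]
  have hesymm : ∀ i l, e i l = e l i := by
    intro i l; simp only [he]
    by_cases h : R i l
    · rw [if_pos h, if_pos (hsymm _ _ h)]
    · rw [if_neg h, if_neg (fun h' => h (hsymm _ _ h'))]
  have hn0 : ∀ i, 0 ≤ n i := fun i => Finset.sum_nonneg (fun l _ => he0 i l)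
  have hrowom : ∀ i l, R i l → ∀ q, e i q = e l q := by
    intro i l h q
    simp only [he]
    by_cases hq : R i q
    · rw [if_pos hq, if_pos (htrans _ _ _ (hsymm _ _ h) hq)]
    · rw [if_neg hq, if_neg (fun hlq => hq (htrans _ _ _ h hlq))]
  have hneq : ∀ i l, R i l → n i = n l := by
    intro i l h
    exact Finset.sum_congr rfl fun q _ => hrowom i l h q
  have hnpos : ∀ i, R i i → (1:ℝ) ≤ n i := by
    intro i h
    have h1 : e i i = 1 := by simp [he, h]
    calc (1:ℝ) = e i i := h1.symm
    _ ≤ n i := Finset.single_le_sum (f := fun l => e i l)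
        (fun l _ => he0 i l) (Finset.mem_univ i)
  have hkey : ∀ l p, (∑ i, e i l * e i p / n i) = e l p := by
    intro l p
    by_cases hlp : R l p
    · have h1 : ∀ i, e i l * e i p / n i = e i l / n l := by
        intro i
        by_cases hil : R i l
        · have hip : R i p := htrans _ _ _ hil hlp
          have h2 : e i p = 1 := by simp [he, hip]
          rw [hneq i l hil, h2, mul_one]
        · have h3 : e i l = 0 := by simp [he, hil]
          rw [h3]; simp
      rw [Finset.sum_congr rfl fun i _ => h1 i, ← Finset.sum_div]
      have h4 : (∑ i, e i l) = n l := by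
        rw [hn]; exact Finset.sum_congr rfl fun i _ => hesymm i l
      have hne : n l ≠ 0 := by
        have := hnpos l (htrans _ _ _ hlp (hsymm _ _ hlp)); linarith
      rw [h4, div_self hne]
      simp [he, hlp]
    · have h1 : ∀ i, e i l * e i p / n i = 0 := by
        intro i
        by_cases hil : R i l
        · have h2 : ¬ R i p := fun hip => hlp (htrans _ _ _ (hsymm _ _ hil) hip)
          have h3 : e i p = 0 := by simp [he, h2]
          rw [h3]; simp
        · have h3 : e i l = 0 := by simp [he, hil]
          rw [h3]; simp
      rw [Finset.sum_congr rfl fun i _ => h1 i]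
      simp [he, hlp]
  have expand : ∀ i, S i * S i / n i = ∑ l, ∑ p, (x l * x p) * (e i l * e i p / n i) := by
    intro i
    rw [hS]
    rw [Finset.sum_mul_sum, Finset.sum_div]
    refine Finset.sum_congr rfl fun l _ => ?_
    rw [Finset.sum_div]
    refine Finset.sum_congr rfl fun p _ => ?_
    ring
  have main : (∑ i, (S i * S i)/n i) = ∑ i, ∑ l, e i l * (x i * x l) := by
    calc ∑ i, (S i * S i)/n i
        = ∑ i, ∑ l, ∑ p, (x l * x p) * (e i l * e i p / n i) :=
          Finset.sum_congr rfl fun i _ => expand i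
      _ = ∑ l, ∑ i, ∑ p, (x l * x p) * (e i l * e i p / n i) := Finset.sum_comm
      _ = ∑ l, ∑ p, ∑ i, (x l * x p) * (e i l * e i p / n i) :=
          Finset.sum_congr rfl fun l _ => Finset.sum_comm
      _ = ∑ l, ∑ p, (x l * x p) * (∑ i, e i l * e i p / n i) := by
          refine Finset.sum_congr rfl fun l _ => Finset.sum_congr rfl fun p _ => ?_
          rw [Finset.mul_sum]
      _ = ∑ l, ∑ p, (x l * x p) * e l p := by
          refine Finset.sum_congr rfl fun l _ => Finset.sum_congr rfl fun p _ => ?_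
          rw [hkey]
      _ = ∑ l, ∑ p, e l p * (x l * x p) := by
          refine Finset.sum_congr rfl fun l _ => Finset.sum_congr rfl fun p _ => ?_
          ring
  rw [← main]
  exact Finset.sum_nonneg fun i _ => div_nonneg (mul_self_nonneg _) (hn0 i)

lemma uclass_psd {ι : Type*} [Fintype ι] [DecidableEq ι] (m : ℕ) :
    ∀ (M : Matrix ι ι ℝ),
    (((Finset.univ ×ˢ Finset.univ : Finset (ι × ι)).image (fun q => M q.1 q.2)).filter
      (fun v => 0 < v)).card ≤ m →
    (∀ i l, M i l = M l i) → (∀ i l, 0 ≤ M i l) → (∀ i l, M i l ≤ M i i) →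
    (∀ i l p, min (M l p) (M i p) ≤ M i l) →
    ∀ x : ι → ℝ, 0 ≤ ∑ i, ∑ l, M i l * (x i * x l) := by
  induction m with
  | zero =>
    intro M hcard hsymm hpos hdiag htri x
    have hzero : ∀ i l, M i l = 0 := by
      intro i l
      by_contra h
      have hpos' : 0 < M i l := lt_of_le_of_ne (hpos i l) (Ne.symm h)
      have : M i l ∈ (((Finset.univ ×ˢ Finset.univ : Finset (ι × ι)).image
          (fun q => M q.1 q.2)).filter (fun v => 0 < v)) := by
        refine Finset.mem_filter.mpr ⟨Finset.mem_image.mpr ⟨(i, l), by simp, rfl⟩, hpos'⟩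
      have := Finset.card_pos.mpr ⟨_, this⟩
      omega
    have : ∀ i, ∑ l, M i l * (x i * x l) = 0 := by
      intro i
      refine Finset.sum_eq_zero fun l _ => by rw [hzero i l, zero_mul]
    rw [Finset.sum_congr rfl fun i _ => this i]
    simp
  | succ m ih =>
    intro M hcard hsymm hpos hdiag htri x
    set pv := (((Finset.univ ×ˢ Finset.univ : Finset (ι × ι)).image
        (fun q => M q.1 q.2)).filter (fun v => 0 < v)) with hpv
    by_cases hne : pv.Nonempty
    · set c := pv.min' hne with hc
      have hcmem : c ∈ pv := pv.min'_mem hne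
      have hcpos : 0 < c := (Finset.mem_filter.mp hcmem).2
      have hcmin : ∀ i l, 0 < M i l → c ≤ M i l := by
        intro i l h
        refine pv.min'_le _ (Finset.mem_filter.mpr ⟨Finset.mem_image.mpr ⟨(i, l), by simp, rfl⟩, h⟩)
      set N : Matrix ι ι ℝ := Matrix.of (fun i l => if 0 < M i l then M i l - c else 0) with hN
      have hNapp : ∀ i l, N i l = if 0 < M i l then M i l - c else 0 := fun i l => rfl
      have hMzero : ∀ i l, ¬ 0 < M i l → M i l = 0 := fun i l h =>
        le_antisymm (not_lt.mp h) (hpos i l)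
      have hNpos : ∀ i l, 0 ≤ N i l := by
        intro i l
        rw [hNapp]
        by_cases h : 0 < M i l
        · rw [if_pos h]; linarith [hcmin i l h]
        · rw [if_neg h]
      have hNsymm : ∀ i l, N i l = N l i := by
        intro i l; rw [hNapp, hNapp, hsymm i l]
      have hNdiag : ∀ i l, N i l ≤ N i i := by
        intro i l
        by_cases h : 0 < M i l
        · have h2 : 0 < M i i := lt_of_lt_of_le h (hdiag i l)
          rw [hNapp, hNapp, if_pos h, if_pos h2]
          linarith [hdiag i l]
        · rw [hNapp, if_neg h]; exact hNpos i i
      have hNtri : ∀ i l p, min (N l p) (N i p) ≤ N i l := by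
        intro i l p
        by_cases h1 : 0 < N l p
        · by_cases h2 : 0 < N i p
          · have hm1 : 0 < M l p := by
              by_contra h; rw [hNapp, if_neg h] at h1; exact lt_irrefl _ h1
            have hm2 : 0 < M i p := by
              by_contra h; rw [hNapp, if_neg h] at h2; exact lt_irrefl _ h2
            have hclp : c < M l p := by
              rw [hNapp, if_pos hm1] at h1; linarith
            have hcip : c < M i p := by
              rw [hNapp, if_pos hm2] at h2; linarith
            have hil : c < M i l := lt_of_lt_of_le (lt_min hclp hcip) (htri i l p)
            rw [hNapp, hNapp, hNapp, if_pos hm1, if_pos hm2, if_pos (hcpos.trans hil)]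
            rw [min_sub_sub_right]
            have := htri i l p
            exact sub_le_sub_right this c
          · exact le_trans (min_le_right _ _) (le_trans (not_lt.mp h2) (hNpos i l))
        · exact le_trans (min_le_left _ _) (le_trans (not_lt.mp h1) (hNpos i l))
      have hsub : (((Finset.univ ×ˢ Finset.univ : Finset (ι × ι)).image
          (fun q => N q.1 q.2)).filter (fun v => 0 < v)) ⊆ (pv.erase c).image (fun v => v - c) := by
        intro v hv
        obtain ⟨hvim, hvpos⟩ := Finset.mem_filter.mp hv
        obtain ⟨q, -, hq⟩ := Finset.mem_image.mp hvim
        have hMq : 0 < M q.1 q.2 := by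
          by_contra h
          rw [hNapp, if_neg h] at hq; rw [← hq] at hvpos; exact lt_irrefl _ hvpos
        rw [hNapp, if_pos hMq] at hq
        refine Finset.mem_image.mpr ⟨M q.1 q.2, ?_, by rw [hq]⟩
        refine Finset.mem_erase.mpr ⟨?_, Finset.mem_filter.mpr
          ⟨Finset.mem_image.mpr ⟨q, by simp, rfl⟩, hMq⟩⟩
        intro h; rw [h] at hq; rw [← hq] at hvpos; simp at hvpos
      have hcardN : (((Finset.univ ×ˢ Finset.univ : Finset (ι × ι)).image
          (fun q => N q.1 q.2)).filter (fun v => 0 < v)).card ≤ m := by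
        calc _ ≤ ((pv.erase c).image (fun v => v - c)).card := Finset.card_le_card hsub
          _ ≤ (pv.erase c).card := Finset.card_image_le
          _ = pv.card - 1 := Finset.card_erase_of_mem hcmem
          _ ≤ m := by omega
      have hNqf := ih N hcardN hNsymm hNpos hNdiag hNtri x
      have hEqf := @qf_indicator_nonneg _ _ (fun i l => 0 < M i l)
        (fun i l => (inferInstance : Decidable (0 < M i l)))
        (fun i l h => by show 0 < M l i; rw [hsymm l i]; exact h)
        (fun i l p h1 h2 => by
          have := htri i p l
          rw [hsymm p l] at this
          exact lt_of_lt_of_le (lt_min h2 h1) this) x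
      have hdecomp : ∀ i l, M i l * (x i * x l) =
          N i l * (x i * x l) + c * ((if 0 < M i l then (1:ℝ) else 0) * (x i * x l)) := by
        intro i l
        rw [hNapp]
        by_cases h : 0 < M i l
        · rw [if_pos h, if_pos h]; ring
        · rw [if_neg h, if_neg h, hMzero i l h]; ring
      calc (0:ℝ) ≤ (∑ i, ∑ l, N i l * (x i * x l)) +
            c * ∑ i, ∑ l, (if 0 < M i l then (1:ℝ) else 0) * (x i * x l) := by
            have := mul_nonneg hcpos.le hEqf
            linarith
        _ = ∑ i, ∑ l, M i l * (x i * x l) := by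
            rw [Finset.mul_sum]
            rw [← Finset.sum_add_distrib]
            refine Finset.sum_congr rfl fun i _ => ?_
            rw [Finset.mul_sum, ← Finset.sum_add_distrib]
            exact Finset.sum_congr rfl fun l _ => (hdecomp i l).symm
    · have hzero : ∀ i l, M i l = 0 := by
        intro i l
        by_contra h
        have hpos' : 0 < M i l := lt_of_le_of_ne (hpos i l) (Ne.symm h)
        exact hne ⟨_, Finset.mem_filter.mpr ⟨Finset.mem_image.mpr ⟨(i, l), by simp, rfl⟩, hpos'⟩⟩
      have : ∀ i, ∑ l, M i l * (x i * x l) = 0 := by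
        intro i
        refine Finset.sum_eq_zero fun l _ => by rw [hzero i l, zero_mul]
      rw [Finset.sum_congr rfl fun i _ => this i]
      simp

lemma treeSum_eqMat {j : ℕ} (hj : 2 ≤ j) (ρ : ℝ) (σ : Equiv.Perm (Fin j)) :
    treeSum (eqMat j ρ) σ = ((j : ℝ) - 1) * ρ := by
  have hjpos : 0 < j := by omega
  unfold treeSum
  have hterm : ∀ k : Fin j, sSup ((fun i : Fin j => eqMat j ρ (σ i) (σ k)) '' {i | i < k})
      = if k = (⟨0, hjpos⟩ : Fin j) then 0 else ρ := by
    intro k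
    by_cases hk : k = (⟨0, hjpos⟩ : Fin j)
    · rw [if_pos hk, hk]
      have : {i : Fin j | i < (⟨0, hjpos⟩ : Fin j)} = ∅ := by
        ext i; simp [Fin.lt_def]
      rw [this]
      simp [Real.sSup_empty]
    · rw [if_neg hk]
      have himg : (fun i : Fin j => eqMat j ρ (σ i) (σ k)) '' {i | i < k} = {ρ} := by
        ext v
        constructor
        · rintro ⟨i, hi, rfl⟩
          have : σ i ≠ σ k := fun h => (ne_of_lt hi) (σ.injective h)
          simp [eqMat, this]
        · rintro rfl
          refine ⟨⟨0, hjpos⟩, ?_, ?_⟩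
          · show (⟨0, hjpos⟩ : Fin j) < k
            rw [Fin.lt_def]
            exact Nat.pos_of_ne_zero (fun h0 => hk (Fin.ext h0))
          · have : σ ⟨0, hjpos⟩ ≠ σ k := fun h => hk (σ.injective h).symm
            simp [eqMat, this]
      rw [himg, csSup_singleton]
  rw [Finset.sum_congr rfl fun k _ => hterm k]
  rw [Finset.sum_ite]
  simp only [Finset.sum_const, smul_eq_mul, Finset.sum_const_zero, zero_add]
  have : (Finset.univ.filter (fun k : Fin j => ¬ k = (⟨0, hjpos⟩ : Fin j))).card = j - 1 := by
    rw [Finset.filter_not]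
    rw [Finset.filter_eq']
    simp [Finset.card_sdiff]
  rw [this]
  simp only [smul_zero, zero_add, nsmul_eq_mul]
  rw [Nat.cast_sub (by omega : 1 ≤ j)]
  push_cast
  ring

lemma Xi_eqMat (j : ℕ) (hj : 2 ≤ j) (ρ : ℝ) :
    Xi (eqMat j ρ) = ((j:ℝ) - 1) * (1 - ρ) := by
  unfold Xi
  simp only [treeSum_eqMat hj ρ]
  rw [ciSup_const]
  ring

lemma chi_eqMat {j : ℕ} (hj : 2 ≤ j) (ρ : ℝ) (h1 : (1:ℝ) - ρ ≠ 0)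
    (h2 : 1 + ((j:ℝ)-1)*ρ ≠ 0) :
    chi (eqMat j ρ) = (j:ℝ) / (1 + ((j:ℝ)-1)*ρ) := by
  have hD : ((1:ℝ) - ρ) * (1 + ((j:ℝ)-1)*ρ) ≠ 0 := mul_ne_zero h1 h2
  set D : ℝ := ((1:ℝ) - ρ) * (1 + ((j:ℝ)-1)*ρ) with hDdef
  set cd : ℝ := (1 + ((j:ℝ)-2)*ρ)/D with hcd
  set co : ℝ := -ρ/D with hco
  set C : Matrix (Fin j) (Fin j) ℝ := Matrix.of (fun i l => if i = l then cd else co) with hC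
  have hCapp : ∀ i l, C i l = if i = l then cd else co := fun i l => rfl
  have hBapp : ∀ i l, eqMat j ρ i l = if i = l then 1 else ρ := fun i l => rfl
  have hCB : C * eqMat j ρ = 1 := by
    ext i k
    rw [Matrix.mul_apply, Matrix.one_apply]
    by_cases hik : i = k
    · subst hik
      rw [if_pos rfl]
      have hterm : ∀ l, C i l * eqMat j ρ l i
          = co*ρ + (if l = i then cd - co*ρ else 0) := by
        intro l
        rw [hCapp, hBapp]
        by_cases h : l = i
        · subst h; simp
        · rw [if_neg (fun h' => h h'.symm), if_neg h, if_neg h]; ring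
      rw [Finset.sum_congr rfl fun l _ => hterm l, Finset.sum_add_distrib,
        Finset.sum_const, Finset.sum_ite_eq' Finset.univ i (fun _ => cd - co*ρ)]
      simp only [Finset.mem_univ, if_true, Finset.card_univ, Fintype.card_fin,
        nsmul_eq_mul]
      rw [hcd, hco]
      field_simp
      rw [hDdef]
      ring
    · rw [if_neg hik]
      have hterm : ∀ l, C i l * eqMat j ρ l k
          = co*ρ + (if l = i then cd*ρ - co*ρ else 0) + (if l = k then co - co*ρ else 0) := by
        intro l
        rw [hCapp, hBapp]
        by_cases h : l = i
        · subst h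
          simp [hik]
        · rw [if_neg (fun h' => h h'.symm), if_neg h]
          by_cases h' : l = k
          · rw [if_pos h', if_pos h']; ring
          · rw [if_neg h', if_neg h']; ring
      rw [Finset.sum_congr rfl fun l _ => hterm l, Finset.sum_add_distrib,
        Finset.sum_add_distrib, Finset.sum_const,
        Finset.sum_ite_eq' Finset.univ i (fun _ => cd*ρ - co*ρ),
        Finset.sum_ite_eq' Finset.univ k (fun _ => co - co*ρ)]
      simp only [Finset.mem_univ, if_true, Finset.card_univ, Fintype.card_fin,
        nsmul_eq_mul]
      rw [hcd, hco, hDdef]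
      field_simp
      ring
  have hinv : (eqMat j ρ)⁻¹ = C := Matrix.inv_eq_left_inv hCB
  unfold chi
  rw [hinv]
  have hrow : ∀ i : Fin j, (∑ l, C i l) = (j:ℝ)*co + (cd - co) := by
    intro i
    have : ∀ l, C i l = co + (if l = i then cd - co else 0) := by
      intro l
      rw [hCapp]
      by_cases h : l = i
      · subst h; simp
      · rw [if_neg (fun h' => h h'.symm), if_neg h]; ring
    rw [Finset.sum_congr rfl fun l _ => this l, Finset.sum_add_distrib, Finset.sum_const,
      Finset.sum_ite_eq' Finset.univ i (fun _ => cd - co)]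
    simp [mul_comm]
  rw [Finset.sum_congr rfl fun i _ => hrow i, Finset.sum_const]
  simp only [Finset.card_univ, Fintype.card_fin, nsmul_eq_mul]
  rw [hcd, hco, hDdef]
  field_simp
  ring

lemma offdiag_sum_le {j : ℕ} (hj : 2 ≤ j) (A : Matrix (Fin j) (Fin j) ℝ) :
    ∑ c : Fin j, ∑ l ∈ Finset.univ.erase c, A c l
      ≤ (j:ℝ) * ⨆ σ : Equiv.Perm (Fin j), treeSum A σ := by
  haveI : NeZero j := ⟨by omega⟩
  have step1 : ∀ c : Fin j, ∑ l ∈ Finset.univ.erase c, A c l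
      ≤ treeSum A (Equiv.addLeft c) := by
    intro c
    have hre : ∑ l ∈ Finset.univ.erase c, A c l
        = ∑ k ∈ Finset.univ.erase 0, A c (c + k) := by
      refine Finset.sum_bij' (fun l _ => l - c) (fun k _ => c + k) ?_ ?_ ?_ ?_ ?_
      · intro l hl
        refine Finset.mem_erase.mpr ⟨?_, Finset.mem_univ _⟩
        have := (Finset.mem_erase.mp hl).1
        intro h
        apply this
        have : l - c + c = 0 + c := by rw [h]
        simpa [sub_add_cancel] using this
      · intro k hk
        refine Finset.mem_erase.mpr ⟨?_, Finset.mem_univ _⟩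
        have := (Finset.mem_erase.mp hk).1
        intro h
        apply this
        have : c + k - c = c - c := by rw [h]
        simpa using this
      · intro l _; simp
      · intro k _; simp
      · intro l _; rw [add_sub_cancel]
    rw [hre]
    have htree : treeSum A (Equiv.addLeft c)
        = sSup ((fun i : Fin j => A (c + i) (c + (0:Fin j))) '' {i | i < 0})
          + ∑ k ∈ Finset.univ.erase 0,
              sSup ((fun i : Fin j => A (c + i) (c + k)) '' {i | i < k}) := by
      rw [treeSum]
      rw [← Finset.add_sum_erase _ _ (Finset.mem_univ (0 : Fin j))]
      rfl
    have hempty : ((fun i : Fin j => A (c + i) (c + (0:Fin j))) '' {i | i < 0}) = ∅ := by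
      have : {i : Fin j | i < 0} = ∅ := by
        ext i; simp [Fin.not_lt_zero]
      rw [this, Set.image_empty]
    rw [htree, hempty, Real.sSup_empty, zero_add]
    refine Finset.sum_le_sum fun k hk => ?_
    have hk0 : (0 : Fin j) < k := by
      rw [Fin.lt_def]
      refine Nat.pos_of_ne_zero fun h => (Finset.mem_erase.mp hk).1 (Fin.ext (by simpa using h))
    refine le_csSup ((Set.toFinite _).image _).bddAbove ?_
    exact ⟨0, hk0, by simp⟩
  calc ∑ c : Fin j, ∑ l ∈ Finset.univ.erase c, A c l
      ≤ ∑ c : Fin j, treeSum A (Equiv.addLeft c) := Finset.sum_le_sum fun c _ => step1 c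
    _ ≤ ∑ c : Fin j, ⨆ σ : Equiv.Perm (Fin j), treeSum A σ :=
        Finset.sum_le_sum fun c _ => le_ciSup (Set.Finite.bddAbove (Set.finite_range _)) _
    _ = (j:ℝ) * ⨆ σ : Equiv.Perm (Fin j), treeSum A σ := by
        rw [Finset.sum_const, Finset.card_univ, Fintype.card_fin, nsmul_eq_mul]

end Aux

set_option maxHeartbeats 2000000 in
/-- Proposition prop5*: for `r ≤ j - 1`, the minimum of `χ` over
`A ∈ M_j` with `Ξ(A) = r` is attained at the equidistant matrix `A^{(j)}_{1-r/(j-1)}`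
and equals `j/(j-r)`. -/
theorem chi_min_over_Xi_level {η : ℝ} (hη : 0 < η) {j : ℕ} (hj : 2 ≤ j) (r : ℝ)
    (hr0 : 0 ≤ r) (hr : r ≤ (j : ℝ) - 1)
    (hrη : 1 - r / ((j : ℝ) - 1) ≤ 1 - η) :
    MemUltra η (eqMat j (1 - r / ((j : ℝ) - 1))) ∧
    Xi (eqMat j (1 - r / ((j : ℝ) - 1))) = r ∧
    chi (eqMat j (1 - r / ((j : ℝ) - 1))) = (j : ℝ) / ((j : ℝ) - r) ∧
    (∀ A : Matrix (Fin j) (Fin j) ℝ, MemUltra η A → Xi A = r →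
      (j : ℝ) / ((j : ℝ) - r) ≤ chi A) := by
  have hj2 : (2:ℝ) ≤ (j:ℝ) := by exact_mod_cast hj
  have hj1 : (0:ℝ) < (j:ℝ) - 1 := by linarith
  set ρ : ℝ := 1 - r / ((j:ℝ) - 1) with hρ
  have hρle : ρ ≤ 1 - η := hrη
  have hρ0 : 0 ≤ ρ := by
    have : r / ((j:ℝ)-1) ≤ 1 := by rw [div_le_one hj1]; linarith
    rw [hρ]; linarith
  have hrpos : 0 < r := by
    have h1 : η ≤ r / ((j:ℝ)-1) := by rw [hρ] at hρle; linarith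
    have h2 : η * ((j:ℝ)-1) ≤ r := (le_div_iff₀ hj1).mp h1
    nlinarith
  have hjr : (0:ℝ) < (j:ℝ) - r := by linarith
  refine ⟨?_, ?_, ?_, ?_⟩
  · -- membership
    refine ⟨?_, ?_, ?_, ?_⟩
    · ext i l
      show eqMat j ρ l i = eqMat j ρ i l
      by_cases h : i = l
      · rw [h]
      · show (if l = i then (1:ℝ) else ρ) = (if i = l then 1 else ρ)
        rw [if_neg (fun h' => h h'.symm), if_neg h]
    · intro i; simp [eqMat]
    · intro i l h
      have : eqMat j ρ i l = ρ := by simp [eqMat, h]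
      rw [this]; exact ⟨hρ0, hρle⟩
    · intro i l p hil hlp hip
      have e1 : eqMat j ρ l p = ρ := by simp [eqMat, hlp]
      have e2 : eqMat j ρ i p = ρ := by simp [eqMat, hip]
      have e3 : eqMat j ρ i l = ρ := by simp [eqMat, hil]
      rw [e1, e2, e3, min_self]
  · -- Xi value
    rw [Xi_eqMat j hj ρ, hρ]
    field_simp
    ring
  · -- chi value
    have h1 : (1:ℝ) - ρ ≠ 0 := by
      have : (1:ℝ) - ρ = r/((j:ℝ)-1) := by rw [hρ]; ring
      rw [this]
      exact ne_of_gt (div_pos hrpos hj1)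
    have h2v : 1 + ((j:ℝ)-1)*ρ = (j:ℝ) - r := by
      rw [hρ]
      field_simp
      ring
    have h2 : 1 + ((j:ℝ)-1)*ρ ≠ 0 := by rw [h2v]; exact ne_of_gt hjr
    rw [chi_eqMat hj ρ h1 h2, h2v]
  · -- minimality
    intro A hA hXi
    obtain ⟨hAsymm, hAdiag, hAoff, hAtri⟩ := hA
    have hsym' : ∀ i l : Fin j, A l i = A i l := fun i l =>
      (congrFun (congrFun hAsymm i) l : A l i = A i l)
    have hAnn : ∀ i l, 0 ≤ A i l := by
      intro i l
      by_cases h : i = l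
      · rw [h, hAdiag]; norm_num
      · exact (hAoff i l h).1
    haveI : NeZero j := ⟨by omega⟩
    have h01 : (0 : Fin j) ≠ (1 : Fin j) := by
      simp [Fin.ext_iff, Fin.val_zero, Fin.val_one]
      omega
    have hη1 : 0 ≤ 1 - η := le_trans ((hAoff 0 1 h01).1) ((hAoff 0 1 h01).2)
    -- quadratic form lower bound
    set M0 : Matrix (Fin j) (Fin j) ℝ :=
      Matrix.of (fun i l => if i = l then 1 - η else A i l) with hM0
    have hM0app : ∀ i l, M0 i l = if i = l then 1 - η else A i l := fun _ _ => rfl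
    have hM0ub : ∀ i l, M0 i l ≤ 1 - η := by
      intro i l
      rw [hM0app]
      by_cases h : i = l
      · rw [if_pos h]
      · rw [if_neg h]; exact (hAoff i l h).2
    have hM0symm : ∀ i l, M0 i l = M0 l i := by
      intro i l
      rw [hM0app, hM0app]
      by_cases h : i = l
      · rw [if_pos h, if_pos h.symm]
      · rw [if_neg h, if_neg (fun h' => h h'.symm), hsym' i l]
    have hM0nn : ∀ i l, 0 ≤ M0 i l := by
      intro i l
      rw [hM0app]
      by_cases h : i = l
      · rw [if_pos h]; exact hη1
      · rw [if_neg h]; exact hAnn i l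
    have hM0diag : ∀ i l, M0 i l ≤ M0 i i := by
      intro i l
      have : M0 i i = 1 - η := by rw [hM0app, if_pos rfl]
      rw [this]; exact hM0ub i l
    have hM0tri : ∀ i l p, min (M0 l p) (M0 i p) ≤ M0 i l := by
      intro i l p
      by_cases hil : i = l
      · have : M0 i l = 1 - η := by rw [hM0app, if_pos hil]
        rw [this]
        exact le_trans (min_le_right _ _) (hM0ub i p)
      · by_cases hlp : l = p
        · subst hlp
          exact le_trans (min_le_right _ _) (le_of_eq (hM0symm i l ▸ rfl))
        · by_cases hip : i = p
          · subst hip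
            calc min (M0 l i) (M0 i i) ≤ M0 l i := min_le_left _ _
              _ = M0 i l := (hM0symm i l).symm
          · have e1 : M0 l p = A l p := by rw [hM0app, if_neg hlp]
            have e2 : M0 i p = A i p := by rw [hM0app, if_neg hip]
            have e3 : M0 i l = A i l := by rw [hM0app, if_neg hil]
            rw [e1, e2, e3]
            exact hAtri i l p hil hlp hip
    have hqlb : ∀ x : Fin j → ℝ,
        η * (∑ i, x i * x i) ≤ ∑ i, ∑ l, A i l * (x i * x l) := by
      intro x
      have hpsd := uclass_psd (ι := Fin j)
        ((((Finset.univ ×ˢ Finset.univ : Finset (Fin j × Fin j)).image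
          (fun q => M0 q.1 q.2)).filter (fun v => 0 < v)).card) M0 le_rfl
        hM0symm hM0nn hM0diag hM0tri x
      have hdec : ∀ i l, A i l * (x i * x l)
          = (if i = l then η * (x i * x l) else 0) + M0 i l * (x i * x l) := by
        intro i l
        rw [hM0app]
        by_cases h : i = l
        · rw [if_pos h, if_pos h, h, hAdiag]; ring
        · rw [if_neg h, if_neg h]; ring
      have hfirst : ∑ i, ∑ l, (if i = l then η * (x i * x l) else 0)
          = η * (∑ i, x i * x i) := by
        rw [Finset.mul_sum]
        refine Finset.sum_congr rfl fun i _ => ?_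
        rw [Finset.sum_ite_eq Finset.univ i (fun l => η * (x i * x l))]
        simp
      calc η * (∑ i, x i * x i)
          = ∑ i, ∑ l, (if i = l then η * (x i * x l) else 0) := hfirst.symm
        _ ≤ (∑ i, ∑ l, (if i = l then η * (x i * x l) else 0))
            + ∑ i, ∑ l, M0 i l * (x i * x l) := by linarith
        _ = ∑ i, ∑ l, A i l * (x i * x l) := by
            rw [← Finset.sum_add_distrib]
            refine Finset.sum_congr rfl fun i _ => ?_
            rw [← Finset.sum_add_distrib]
            exact Finset.sum_congr rfl fun l _ => (hdec i l).symm
    -- invertibility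
    have hdet : A.det ≠ 0 := by
      intro hdet0
      obtain ⟨w, hw0, hwA⟩ := Matrix.exists_mulVec_eq_zero_iff.mpr hdet0
      have h1 : ∑ i, ∑ l, A i l * (w i * w l) = 0 := by
        have hterm : ∀ i : Fin j, ∑ l, A i l * (w i * w l) = w i * (A.mulVec w i) := by
          intro i
          rw [Matrix.mulVec, dotProduct, Finset.mul_sum]
          exact Finset.sum_congr rfl fun l _ => by ring
        rw [Finset.sum_congr rfl fun i _ => hterm i, hwA]
        simp
      obtain ⟨i0, hi0⟩ := Function.ne_iff.mp hw0
      have h3 : 0 < ∑ i, w i * w i := by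
        refine Finset.sum_pos' (fun i _ => mul_self_nonneg _) ⟨i0, Finset.mem_univ _, ?_⟩
        exact mul_self_pos.mpr (by simpa using hi0)
      have h4 := hqlb w
      nlinarith
    have hunit : IsUnit A.det := isUnit_iff_ne_zero.mpr hdet
    have hAAinv : A * A⁻¹ = 1 := Matrix.mul_nonsing_inv A hunit
    set vv : Fin j → ℝ := fun i => ∑ l, A⁻¹ i l with hvv
    have hchiv : chi A = ∑ i, vv i := rfl
    have hAv : ∀ i, ∑ l, A i l * vv l = 1 := by
      intro i
      have hcalc : ∑ l, A i l * vv l = ∑ p, (A * A⁻¹) i p := by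
        calc ∑ l, A i l * vv l = ∑ l, ∑ p, A i l * A⁻¹ l p := by
              refine Finset.sum_congr rfl fun l _ => ?_
              rw [hvv, Finset.mul_sum]
          _ = ∑ p, ∑ l, A i l * A⁻¹ l p := Finset.sum_comm
          _ = ∑ p, (A * A⁻¹) i p := by
              refine Finset.sum_congr rfl fun p _ => ?_
              rw [Matrix.mul_apply]
      rw [hcalc, hAAinv]
      simp [Matrix.one_apply]
    set S : ℝ := ∑ i, ∑ l, A i l with hSdef
    set W : ℝ := ⨆ σ : Equiv.Perm (Fin j), treeSum A σ with hWdef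
    have hWr : W = (j:ℝ) - 1 - r := by
      rw [Xi, ← hWdef] at hXi
      linarith
    have hsplit : S = (j:ℝ) + ∑ c : Fin j, ∑ l ∈ Finset.univ.erase c, A c l := by
      rw [hSdef]
      have hrow : ∀ c : Fin j, ∑ l, A c l = A c c + ∑ l ∈ Finset.univ.erase c, A c l :=
        fun c => (Finset.add_sum_erase _ _ (Finset.mem_univ c)).symm
      rw [Finset.sum_congr rfl fun c _ => hrow c, Finset.sum_add_distrib]
      congr 1
      rw [Finset.sum_congr rfl fun c _ => hAdiag c]
      simp
    have hoffnn : 0 ≤ ∑ c : Fin j, ∑ l ∈ Finset.univ.erase c, A c l :=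
      Finset.sum_nonneg fun c _ => Finset.sum_nonneg fun l _ => hAnn c l
    have hSpos : 0 < S := by rw [hsplit]; linarith
    have hSle : S ≤ (j:ℝ) * ((j:ℝ) - r) := by
      have hoff := offdiag_sum_le hj A
      rw [← hWdef] at hoff
      rw [hsplit]
      have : (j:ℝ) * W = (j:ℝ)*((j:ℝ)-1-r) := by rw [hWr]
      nlinarith
    -- Cauchy–Schwarz via discriminant
    have hQvv : ∑ i, ∑ l, A i l * (vv i * vv l) = chi A := by
      calc ∑ i, ∑ l, A i l * (vv i * vv l)
          = ∑ i, vv i * (∑ l, A i l * vv l) := by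
            refine Finset.sum_congr rfl fun i _ => ?_
            rw [Finset.mul_sum]
            exact Finset.sum_congr rfl fun l _ => by ring
        _ = ∑ i, vv i := by
            refine Finset.sum_congr rfl fun i _ => ?_
            rw [hAv i, mul_one]
        _ = chi A := hchiv.symm
    have hT2 : ∑ i, ∑ l, A i l * vv i = (j:ℝ) := by
      calc ∑ i, ∑ l, A i l * vv i = ∑ l, ∑ i, A i l * vv i := Finset.sum_comm
        _ = ∑ l : Fin j, (1:ℝ) := by
            refine Finset.sum_congr rfl fun l _ => ?_
            calc ∑ i, A i l * vv i = ∑ i, A l i * vv i :=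
              Finset.sum_congr rfl fun i _ => by rw [hsym' l i]
            _ = 1 := hAv l
        _ = (j:ℝ) := by simp
    have hT1 : ∑ i : Fin j, ∑ l, A i l * vv l = (j:ℝ) := by
      calc ∑ i : Fin j, ∑ l, A i l * vv l = ∑ i : Fin j, (1:ℝ) := by
            exact Finset.sum_congr rfl fun i _ => hAv i
        _ = (j:ℝ) := by simp
    have hquad : ∀ t : ℝ, 0 ≤ (chi A) * (t*t) + (2*(j:ℝ)) * t + S := by
      intro t
      have h := hqlb (fun i => 1 + t * vv i)
      have hnn : 0 ≤ η * ∑ i, (1 + t * vv i) * (1 + t * vv i) :=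
        mul_nonneg hη.le (Finset.sum_nonneg fun i _ => mul_self_nonneg _)
      have hexp : ∑ i, ∑ l, A i l * ((1 + t * vv i) * (1 + t * vv l))
          = (∑ i, ∑ l, A i l * (vv i * vv l)) * (t*t)
            + ((∑ i, ∑ l, A i l * vv l) + (∑ i, ∑ l, A i l * vv i)) * t
            + ∑ i, ∑ l, A i l := by
        have hpt : ∀ i l, A i l * ((1 + t * vv i) * (1 + t * vv l))
            = A i l * (vv i * vv l) * (t*t) + (A i l * vv l + A i l * vv i) * t + A i l := by
          intro i l; ring
        rw [Finset.sum_congr rfl fun i _ => Finset.sum_congr rfl fun l _ => hpt i l]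
        simp only [Finset.sum_add_distrib, ← Finset.sum_mul]
      rw [hexp, hQvv, hT1, hT2, ← hSdef] at h
      calc (0:ℝ) ≤ η * ∑ i, (1 + t * vv i) * (1 + t * vv i) := hnn
        _ ≤ chi A * (t*t) + ((j:ℝ) + (j:ℝ)) * t + S := h
        _ = (chi A) * (t*t) + (2*(j:ℝ)) * t + S := by ring
    have hdisc := discrim_le_zero hquad
    rw [discrim] at hdisc
    have hjj : (j:ℝ) * (j:ℝ) ≤ chi A * S := by nlinarith
    have hchinn : 0 ≤ chi A := by nlinarith
    rw [div_le_iff₀ hjr]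
    have hfin : (j:ℝ) * (j:ℝ) ≤ (j:ℝ) * (chi A * ((j:ℝ) - r)) := by
      have := mul_le_mul_of_nonneg_left hSle hchinn
      nlinarith
    have hjpos : (0:ℝ) < (j:ℝ) := by linarith
    exact le_of_mul_le_mul_left (by linarith [hfin]) hjpos
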